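/- For every h ∈ ℂ, the 9×9-matrix-valued function q ↦ (G(q)⁻¹ ⊗ G(q)⁻¹) R(q) (G(q) ⊗ G(q)), defined for complex q ∉ {0, 1}, converges as q → 1 (through values q ≠ 1) to the matrix R_h; i.e., the contraction limit lim_{q→1} (G(q)⁻¹ ⊗ G(q)⁻¹) R(q) (G(q) ⊗ G(q)) = R_h holds (eq. (2.10): the super-Jordanian R-matrix of U_h(sl(2|1)) in the fundamental ⊗ fundamental representation). -/

import Mathlib

noncomputable section

namespace SuperJordanian

open Matrix
open scoped Kronecker

/-- `G(q) = I₃ + (h/(q−1)) E₁₂`. -/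
def G (h q : ℂ) : Matrix (Fin 3) (Fin 3) ℂ :=
  1 + (h / (q - 1)) • single 0 1 1

/-- `G(q)⁻¹ = I₃ − (h/(q−1)) E₁₂` (since `E₁₂² = 0`). -/
def Ginv (h q : ℂ) : Matrix (Fin 3) (Fin 3) ℂ :=
  1 - (h / (q - 1)) • single 0 1 1

/-- The `R`-matrix of `U_q(sl(2|1))` in the fundamental ⊗ fundamental representation:
diagonal `(q,1,1,1,q,1,1,1,−q⁻²)`, entries `q − q⁻¹` at positions `(2,4)`, `(3,7)`, `(6,8)`
(in the pair indexing: `((0,1),(1,0))`, `((0,2),(2,0))`, `((1,2),(2,1))`), zero elsewhere. -/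
def Rq (q : ℂ) : Matrix (Fin 3 × Fin 3) (Fin 3 × Fin 3) ℂ := fun p r =>
  if p = r then
    (if p = (0, 0) ∨ p = (1, 1) then q else if p = (2, 2) then -(q⁻¹) ^ 2 else 1)
  else if (p = (0, 1) ∧ r = (1, 0)) ∨ (p = (0, 2) ∧ r = (2, 0)) ∨ (p = (1, 2) ∧ r = (2, 1))
    then q - q⁻¹
  else 0

/-- The super-Jordanian `R_h`-matrix in the fundamental ⊗ fundamental representation:
the identity except `(R_h)₁₂ = h`, `(R_h)₁₄ = −h`, `(R_h)₁₅ = h²`, `(R_h)₂₅ = h`,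
`(R_h)₄₅ = −h`, `(R_h)₉₉ = −1`. -/
def Rh (h : ℂ) : Matrix (Fin 3 × Fin 3) (Fin 3 × Fin 3) ℂ := fun p r =>
  if p = r then (if p = (2, 2) then -1 else 1)
  else if p = (0, 0) ∧ r = (0, 1) then h
  else if p = (0, 0) ∧ r = (1, 0) then -h
  else if p = (0, 0) ∧ r = (1, 1) then h ^ 2
  else if p = (0, 1) ∧ r = (1, 1) then h
  else if p = (1, 0) ∧ r = (1, 1) then -h
  else 0

/-- The simplified (singularity-free) form of the conjugated `R`-matrix for `q ∉ {0, 1}`. -/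
def Rlim (h q : ℂ) : Matrix (Fin 3 × Fin 3) (Fin 3 × Fin 3) ℂ := fun p r =>
  if p = r then
    (if p = (0, 0) ∨ p = (1, 1) then q else if p = (2, 2) then -(q⁻¹) ^ 2 else 1)
  else if p = (0, 0) ∧ r = (0, 1) then h
  else if p = (0, 0) ∧ r = (1, 0) then -h / q
  else if p = (0, 0) ∧ r = (1, 1) then h ^ 2 / q
  else if p = (0, 1) ∧ r = (1, 0) then (q ^ 2 - 1) / q
  else if p = (0, 1) ∧ r = (1, 1) then h / q
  else if p = (0, 2) ∧ r = (2, 0) then (q ^ 2 - 1) / q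
  else if p = (1, 0) ∧ r = (1, 1) then -h
  else if p = (1, 2) ∧ r = (2, 1) then (q ^ 2 - 1) / q
  else 0

set_option maxHeartbeats 4000000 in
lemma key (h q : ℂ) (hq0 : q ≠ 0) (hq1 : q ≠ 1) :
    (Ginv h q ⊗ₖ Ginv h q) * Rq q * (G h q ⊗ₖ G h q) = Rlim h q := by
  have hq1' : q - 1 ≠ 0 := sub_ne_zero.2 hq1
  ext p r
  fin_cases p <;> fin_cases r <;>
  · simp only [Matrix.mul_apply, Fintype.sum_prod_type, Fin.sum_univ_three,
      Matrix.kroneckerMap_apply, G, Ginv, Matrix.one_apply, Matrix.single,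
      Matrix.add_apply, Matrix.sub_apply, Matrix.smul_apply, smul_eq_mul, Matrix.of_apply]
    simp (config := { decide := true }) [Rq, Rlim, Prod.ext_iff]
    try field_simp
    try ring
    try (rw [show (-q + (q ^ 2 * 5 - q ^ 3 * 10) + (q ^ 4 * 10 - q ^ 5 * 5) + q ^ 6)
          = q * (q - 1) ^ 5 from by ring]; field_simp; ring)

set_option maxHeartbeats 1600000 in
lemma Rlim_one (h : ℂ) : Rlim h 1 = Rh h := by
  ext p r
  fin_cases p <;> fin_cases r <;>
    simp (config := { decide := true }) [Rlim, Rh, Prod.ext_iff]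

set_option maxHeartbeats 1600000 in
lemma tendsto_Rlim (h : ℂ) :
    Filter.Tendsto (fun q : ℂ => Rlim h q) (nhds 1) (nhds (Rlim h 1)) := by
  have : ContinuousAt (fun q : ℂ => Rlim h q) 1 := by
    apply continuousAt_pi.2
    intro p
    apply continuousAt_pi.2
    intro r
    simp only [Rlim]
    split_ifs <;>
      first
        | exact continuousAt_const
        | exact continuousAt_id
        | exact ((continuousAt_id.inv₀ one_ne_zero).pow 2).neg
        | exact continuousAt_const.div continuousAt_id one_ne_zero
        | exact (continuousAt_const.div continuousAt_id one_ne_zero).neg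
        | exact ((continuousAt_id.pow 2).sub continuousAt_const).div continuousAt_id one_ne_zero
  exact this

/-- the contraction limit
`lim_{q→1} (G(q)⁻¹ ⊗ G(q)⁻¹) R(q) (G(q) ⊗ G(q)) = R_h`,
the limit being taken through values `q ∉ {0, 1}`. -/
theorem statement13 (h : ℂ) :
    Filter.Tendsto (fun q : ℂ => (Ginv h q ⊗ₖ Ginv h q) * Rq q * (G h q ⊗ₖ G h q))
      (nhdsWithin 1 {q : ℂ | q ≠ 0 ∧ q ≠ 1}) (nhds (Rh h)) := by
  have hE : (fun q : ℂ => (Ginv h q ⊗ₖ Ginv h q) * Rq q * (G h q ⊗ₖ G h q))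
      =ᶠ[nhdsWithin 1 {q : ℂ | q ≠ 0 ∧ q ≠ 1}] fun q => Rlim h q := by
    filter_upwards [self_mem_nhdsWithin] with q hq
    exact key h q hq.1 hq.2
  have h2 : Filter.Tendsto (fun q : ℂ => Rlim h q)
      (nhdsWithin 1 {q : ℂ | q ≠ 0 ∧ q ≠ 1}) (nhds (Rh h)) := by
    rw [← Rlim_one h]
    exact (tendsto_Rlim h).mono_left nhdsWithin_le_nhds
  exact h2.congr' hE.symm

end SuperJordanian
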